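/- Let m = n(n+1)/2 and let z : ℝⁿ → ℝᵐ map x to the vector of quadratic monomials (x₁², x₁x₂, …, x₁xₙ, x₂², x₂x₃, …, xₙ²). Let E be a real symmetric positive definite n×n matrix, α > 0, A ∈ ℝⁿˣⁿ, B ∈ ℝⁿˣᵐ, and let M₁, …, M_k be real symmetric (n+m)×(n+m) matrices such that for each i and every x ∈ ℝⁿ with xᵀEx ≤ α², the vector v = (x, z(x)) satisfies vᵀM_i v ≥ 0. Suppose there exist a real symmetric n×n matrix P, scalars ξ₁,…,ξ_k ≥ 0, ε > 0 and r > 0 such that (i) [[AᵀP + PA, PB],[BᵀP, 0]] + Σᵢ ξᵢ Mᵢ − [[−εI, 0],[0, 0]] is negative definite, and (ii) (1/α²)E ⪯ P ⪯ (1/r²)I. Then for every differentiable trajectory x : [0,∞) → ℝⁿ satisfying x'(t) = A x(t) + B z(x(t)) for all t ≥ 0 and x(0)ᵀx(0) ≤ r², one has x(t)ᵀP x(t) ≤ 1 for all t ≥ 0 and x(t) → 0 as t → ∞. -/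

import Mathlib

open Matrix

/-- The list of quadratic monomials of `x ∈ ℝⁿ` in the order
`x₁², x₁x₂, …, x₁xₙ, x₂², x₂x₃, …, xₙ²`. -/
def quadMonomialList {n : ℕ} (x : Fin n → ℝ) : List ℝ :=
  (List.finRange n).flatMap fun i =>
    ((List.finRange n).filter fun j => decide (i ≤ j)).map fun j => x i * x j

/-- The vector `z(x) ∈ ℝᵐ` of quadratic monomials of `x ∈ ℝⁿ`
(with `m = n(n+1)/2`). -/
def quadMonomialVec {n : ℕ} (m : ℕ) (x : Fin n → ℝ) : Fin m → ℝ :=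
  fun l => (quadMonomialList x).getD l.val 0

-- derivative of quadratic form along a curve
lemma quad_hasDerivAt {n : ℕ} (P : Matrix (Fin n) (Fin n) ℝ) {f : ℝ → Fin n → ℝ}
    {f' : Fin n → ℝ} {t : ℝ} (hf : HasDerivAt f f' t) :
    HasDerivAt (fun s => f s ⬝ᵥ P *ᵥ f s)
      (f' ⬝ᵥ P *ᵥ f t + f t ⬝ᵥ P *ᵥ f') t := by
  have hcomp : ∀ i, HasDerivAt (fun s => f s i) (f' i) t := fun i =>
    ((ContinuousLinearMap.proj (R := ℝ) (φ := fun _ : Fin n => ℝ) i).hasFDerivAt.comp_hasDerivAt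
      t hf)
  have key : HasDerivAt (fun s => ∑ i, ∑ j, f s i * (P i j * f s j))
      (∑ i, ∑ j, (f' i * (P i j * f t j) + f t i * (P i j * f' j))) t := by
    refine HasDerivAt.fun_sum fun i _ => HasDerivAt.fun_sum fun j _ => ?_
    exact (hcomp i).mul ((hcomp j).const_mul (P i j))
  have e1 : (fun s => ∑ i, ∑ j, f s i * (P i j * f s j)) = fun s => f s ⬝ᵥ P *ᵥ f s := by
    funext s
    simp [dotProduct, mulVec, Finset.mul_sum]
  have e2 : (∑ i, ∑ j, (f' i * (P i j * f t j) + f t i * (P i j * f' j)))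
      = f' ⬝ᵥ P *ᵥ f t + f t ⬝ᵥ P *ᵥ f' := by
    simp [dotProduct, mulVec, Finset.mul_sum, Finset.sum_add_distrib]
  rw [← e1, ← e2]
  exact key

lemma block_quad_eq {n m : ℕ} (A P : Matrix (Fin n) (Fin n) ℝ)
    (B : Matrix (Fin n) (Fin m) ℝ) (y : Fin n → ℝ) (z : Fin m → ℝ) :
    Sum.elim y z ⬝ᵥ (fromBlocks (Aᵀ * P + P * A) (P * B) (Bᵀ * P) 0) *ᵥ Sum.elim y z
      = (A *ᵥ y + B *ᵥ z) ⬝ᵥ P *ᵥ y + y ⬝ᵥ P *ᵥ (A *ᵥ y + B *ᵥ z) := by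
  simp only [fromBlocks_mulVec, sumElim_dotProduct_sumElim, add_mulVec, zero_mulVec,
    add_zero, dotProduct_add, mulVec_add, add_dotProduct, ← mulVec_mulVec]
  rw [dotProduct_mulVec y Aᵀ, vecMul_transpose, dotProduct_mulVec z Bᵀ, vecMul_transpose]
  simp only [Sum.elim_comp_inl, Sum.elim_comp_inr, ← dotProduct_mulVec]
  ring

lemma eps_block_quad {n m : ℕ} (ε : ℝ) (y : Fin n → ℝ) (z : Fin m → ℝ) :
    Sum.elim y z ⬝ᵥ
      (fromBlocks (-(ε • (1 : Matrix (Fin n) (Fin n) ℝ))) 0 0 0) *ᵥ Sum.elim y z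
      = -(ε * (y ⬝ᵥ y)) := by
  simp [fromBlocks_mulVec, sumElim_dotProduct_sumElim, neg_mulVec, smul_mulVec,
    dotProduct_neg, dotProduct_smul]

lemma dotProduct_sum' {ι N : Type*} [Fintype ι] [Fintype N] (v : N → ℝ) (w : ι → N → ℝ) :
    v ⬝ᵥ ∑ i, w i = ∑ i, v ⬝ᵥ w i :=
  map_sum (AddMonoidHom.mk' (fun u => v ⬝ᵥ u) fun a b => dotProduct_add v a b) w Finset.univ

lemma sum_quad {N : Type*} [Fintype N] {k : ℕ} (M : Fin k → Matrix N N ℝ) (ξ : Fin k → ℝ)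
    (v : N → ℝ) :
    v ⬝ᵥ (∑ i, ξ i • M i) *ᵥ v = ∑ i, ξ i * (v ⬝ᵥ (M i) *ᵥ v) := by
  rw [show (∑ i, ξ i • M i) *ᵥ v = ∑ i, (ξ i • M i) *ᵥ v from
    map_sum (Matrix.mulVec.addMonoidHomLeft v) _ _, dotProduct_sum']
  simp [smul_mulVec, dotProduct_smul]

lemma quad_continuous {n : ℕ} (P : Matrix (Fin n) (Fin n) ℝ) :
    Continuous fun y : Fin n → ℝ => y ⬝ᵥ P *ᵥ y := by
  have : (fun y : Fin n → ℝ => y ⬝ᵥ P *ᵥ y)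
      = fun y => ∑ i, y i * ∑ j, P i j * y j := rfl
  rw [this]
  exact continuous_finset_sum _ fun i _ => (continuous_apply i).mul
    (continuous_finset_sum _ fun j _ => continuous_const.mul (continuous_apply j))

lemma posdef_lower {n : ℕ} {P : Matrix (Fin n) (Fin n) ℝ} (hP : P.PosDef)
    [Nonempty (Fin n)] :
    ∃ c > 0, ∀ y : Fin n → ℝ, c * ‖y‖ ^ 2 ≤ y ⬝ᵥ P *ᵥ y := by
  obtain ⟨u, humem, humin⟩ := (isCompact_sphere (0 : Fin n → ℝ) 1).exists_isMinOn
    (NormedSpace.sphere_nonempty.mpr zero_le_one) (quad_continuous P).continuousOn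
  have hu1 : ‖u‖ = 1 := by simpa using mem_sphere_zero_iff_norm.mp humem
  have hu0 : u ≠ 0 := by intro h; rw [h] at hu1; simp at hu1
  refine ⟨u ⬝ᵥ P *ᵥ u, by simpa using hP.dotProduct_mulVec_pos hu0, fun y => ?_⟩
  rcases eq_or_ne y 0 with rfl | hy
  · simp
  · have hny : (0:ℝ) < ‖y‖ := norm_pos_iff.mpr hy
    have hmem : ‖y‖⁻¹ • y ∈ Metric.sphere (0 : Fin n → ℝ) 1 := by
      simp [norm_smul, abs_of_nonneg (le_of_lt (inv_pos.mpr hny)), inv_mul_cancel₀ hny.ne']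
    have hq : (‖y‖⁻¹ • y) ⬝ᵥ P *ᵥ (‖y‖⁻¹ • y) = (y ⬝ᵥ P *ᵥ y) / ‖y‖ ^ 2 := by
      rw [mulVec_smul, smul_dotProduct, dotProduct_smul, smul_eq_mul, smul_eq_mul,
        div_eq_mul_inv, pow_two, mul_inv]
      ring
    have h3 : u ⬝ᵥ P *ᵥ u ≤ (y ⬝ᵥ P *ᵥ y) / ‖y‖ ^ 2 := by rw [← hq]; exact humin hmem
    calc u ⬝ᵥ P *ᵥ u * ‖y‖ ^ 2 ≤ ((y ⬝ᵥ P *ᵥ y) / ‖y‖ ^ 2) * ‖y‖ ^ 2 := by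
          exact mul_le_mul_of_nonneg_right h3 (sq_nonneg _)
      _ = y ⬝ᵥ P *ᵥ y := by field_simp

/-- Theorem 1 (region-of-attraction estimate): suppose the nonlinearity `z`
satisfies the quadratic constraints `M₁, …, M_k` on the ellipsoid
`{x : xᵀEx ≤ α²}`, and there exist a symmetric `P`, multipliers `ξᵢ ≥ 0`,
`ε > 0`, and `r > 0` such that
(i) `[[AᵀP+PA, PB],[BᵀP, 0]] + Σᵢ ξᵢ Mᵢ − [[−εI, 0],[0, 0]] ≺ 0` and
(ii) `(1/α²)E ⪯ P ⪯ (1/r²)I`.  Then every differentiable trajectory of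
`ẋ = Ax + Bz(x)` starting in `{x : xᵀx ≤ r²}` remains in `{x : xᵀPx ≤ 1}`
and converges to the origin. -/
theorem roa_estimate {n m k : ℕ} (hm : m = n * (n + 1) / 2)
    (E : Matrix (Fin n) (Fin n) ℝ) (hE : E.PosDef) (α : ℝ) (hα : 0 < α)
    (A : Matrix (Fin n) (Fin n) ℝ) (B : Matrix (Fin n) (Fin m) ℝ)
    (M : Fin k → Matrix (Fin n ⊕ Fin m) (Fin n ⊕ Fin m) ℝ)
    (hMsym : ∀ i, (M i).IsHermitian)
    (hQC : ∀ (i : Fin k) (y : Fin n → ℝ), y ⬝ᵥ E.mulVec y ≤ α ^ 2 →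
      0 ≤ Sum.elim y (quadMonomialVec m y) ⬝ᵥ
            (M i).mulVec (Sum.elim y (quadMonomialVec m y)))
    (P : Matrix (Fin n) (Fin n) ℝ) (hP : P.IsHermitian)
    (ξ : Fin k → ℝ) (hξ : ∀ i, 0 ≤ ξ i) (ε r : ℝ) (hε : 0 < ε) (hr : 0 < r)
    (hLMI : (-(fromBlocks (Aᵀ * P + P * A) (P * B) (Bᵀ * P) 0
            + ∑ i, ξ i • M i
            - fromBlocks (-(ε • (1 : Matrix (Fin n) (Fin n) ℝ))) 0 0 0)).PosDef)
    (hPE : (P - (α ^ 2)⁻¹ • E).PosSemidef)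
    (hPI : ((r ^ 2)⁻¹ • (1 : Matrix (Fin n) (Fin n) ℝ) - P).PosSemidef)
    (x : ℝ → Fin n → ℝ)
    (hode : ∀ t : ℝ, 0 ≤ t →
      HasDerivAt x (A.mulVec (x t) + B.mulVec (quadMonomialVec m (x t))) t)
    (hinit : x 0 ⬝ᵥ x 0 ≤ r ^ 2) :
    (∀ t : ℝ, 0 ≤ t → x t ⬝ᵥ P.mulVec (x t) ≤ 1) ∧
    Filter.Tendsto x Filter.atTop (nhds 0) := by
  classical
  set K : ℝ := ε * r ^ 2 with hKdef
  have hK0 : 0 < K := mul_pos hε (pow_pos hr 2)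
  -- key pointwise decay estimate
  have hkey : ∀ y : Fin n → ℝ, y ⬝ᵥ E *ᵥ y ≤ α ^ 2 →
      (A *ᵥ y + B *ᵥ quadMonomialVec m y) ⬝ᵥ P *ᵥ y
        + y ⬝ᵥ P *ᵥ (A *ᵥ y + B *ᵥ quadMonomialVec m y) ≤ -(ε * (y ⬝ᵥ y)) := by
    intro y hy
    set v : Fin n ⊕ Fin m → ℝ := Sum.elim y (quadMonomialVec m y) with hv
    set N := fromBlocks (Aᵀ * P + P * A) (P * B) (Bᵀ * P) 0
            + ∑ i, ξ i • M i
            - fromBlocks (-(ε • (1 : Matrix (Fin n) (Fin n) ℝ))) 0 0 0 with hNdef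
    have h1 : v ⬝ᵥ N *ᵥ v ≤ 0 := by
      have h := hLMI.posSemidef.dotProduct_mulVec_nonneg v
      rw [star_trivial, neg_mulVec, dotProduct_neg] at h
      linarith
    have h2 : 0 ≤ v ⬝ᵥ (∑ i, ξ i • M i) *ᵥ v := by
      rw [sum_quad]
      exact Finset.sum_nonneg fun i _ => mul_nonneg (hξ i) (hQC i y hy)
    have hF : fromBlocks (Aᵀ * P + P * A) (P * B) (Bᵀ * P) 0
        = N - (∑ i, ξ i • M i) + fromBlocks (-(ε • (1 : Matrix (Fin n) (Fin n) ℝ))) 0 0 0 := by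
      rw [hNdef]; abel
    have hcalc : v ⬝ᵥ (fromBlocks (Aᵀ * P + P * A) (P * B) (Bᵀ * P) 0) *ᵥ v
        ≤ -(ε * (y ⬝ᵥ y)) := by
      rw [hF, add_mulVec, sub_mulVec, dotProduct_add, dotProduct_sub, eps_block_quad]
      linarith
    rw [← block_quad_eq A P B y (quadMonomialVec m y)]
    exact hcalc
  -- P is positive definite
  have hPpd : P.PosDef := by
    have hsm : ((α ^ 2)⁻¹ • E).PosDef := by
      refine Matrix.PosDef.of_dotProduct_mulVec_pos ?_ fun y hy => ?_
      · unfold Matrix.IsHermitian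
        rw [conjTranspose_smul, hE.1.eq, star_trivial]
      · rw [star_trivial, smul_mulVec, dotProduct_smul, smul_eq_mul]
        exact mul_pos (inv_pos.mpr (pow_pos hα 2)) (by simpa using hE.dotProduct_mulVec_pos hy)
    have := hsm.add_posSemidef hPE
    have he : (α ^ 2)⁻¹ • E + (P - (α ^ 2)⁻¹ • E) = P := by abel
    rwa [he] at this
  -- simple quadratic form inequalities
  have hVle : ∀ y : Fin n → ℝ, y ⬝ᵥ P *ᵥ y ≤ (r ^ 2)⁻¹ * (y ⬝ᵥ y) := by
    intro y
    have h := hPI.dotProduct_mulVec_nonneg y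
    rw [star_trivial, sub_mulVec, dotProduct_sub, smul_mulVec, one_mulVec,
      dotProduct_smul, smul_eq_mul] at h
    linarith
  have hEle : ∀ y : Fin n → ℝ, y ⬝ᵥ P *ᵥ y ≤ 1 → y ⬝ᵥ E *ᵥ y ≤ α ^ 2 := by
    intro y hy
    have h := hPE.dotProduct_mulVec_nonneg y
    rw [star_trivial, sub_mulVec, dotProduct_sub, smul_mulVec,
      dotProduct_smul, smul_eq_mul] at h
    have hα2 : (0:ℝ) < α ^ 2 := pow_pos hα 2
    rw [← mul_le_mul_iff_right₀ (inv_pos.mpr hα2), inv_mul_cancel₀ hα2.ne']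
    linarith
  set V : ℝ → ℝ := fun t => x t ⬝ᵥ P *ᵥ x t with hVdef
  set D : ℝ → ℝ := fun t =>
    (A *ᵥ x t + B *ᵥ quadMonomialVec m (x t)) ⬝ᵥ P *ᵥ x t
      + x t ⬝ᵥ P *ᵥ (A *ᵥ x t + B *ᵥ quadMonomialVec m (x t)) with hDdef
  have hVder : ∀ t : ℝ, 0 ≤ t → HasDerivAt V (D t) t := fun t ht =>
    quad_hasDerivAt P (hode t ht)
  have hDle : ∀ t : ℝ, 0 ≤ t → V t ≤ 1 → D t ≤ -(K * V t) := by
    intro t ht hV1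
    have h1 := hkey (x t) (hEle (x t) hV1)
    have h2 : r ^ 2 * V t ≤ x t ⬝ᵥ x t := by
      have := hVle (x t)
      have hr2 : (0:ℝ) < r ^ 2 := pow_pos hr 2
      rw [← mul_le_mul_iff_right₀ (inv_pos.mpr hr2)] at *
      calc (r ^ 2)⁻¹ * (r ^ 2 * V t) = V t := by field_simp
        _ ≤ (r ^ 2)⁻¹ * (x t ⬝ᵥ x t) := hVle (x t)
    calc D t ≤ -(ε * (x t ⬝ᵥ x t)) := h1
      _ ≤ -(K * V t) := by rw [hKdef]; nlinarith
  have hV0 : V 0 ≤ 1 := by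
    calc V 0 ≤ (r ^ 2)⁻¹ * (x 0 ⬝ᵥ x 0) := hVle (x 0)
      _ ≤ (r ^ 2)⁻¹ * r ^ 2 := by
          exact mul_le_mul_of_nonneg_left hinit (le_of_lt (inv_pos.mpr (pow_pos hr 2)))
      _ = 1 := inv_mul_cancel₀ (pow_pos hr 2).ne'
  -- invariance
  have hinv : ∀ t : ℝ, 0 ≤ t → V t ≤ 1 := by
    by_contra hcon
    push_neg at hcon
    obtain ⟨T, hT0, hT1⟩ := hcon
    set S : Set ℝ := {s | s ∈ Set.Icc 0 T ∧ 1 < V s} with hSdef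
    have hSne : S.Nonempty := ⟨T, ⟨⟨hT0, le_refl T⟩, hT1⟩⟩
    have hSbd : BddBelow S := ⟨0, fun s hs => hs.1.1⟩
    set t₀ : ℝ := sInf S with ht₀def
    have ht₀0 : 0 ≤ t₀ := le_csInf hSne fun s hs => hs.1.1
    have ht₀T : t₀ ≤ T := csInf_le hSbd ⟨⟨hT0, le_refl T⟩, hT1⟩
    have hVcont : ContinuousAt V t₀ := (hVder t₀ ht₀0).continuousAt
    -- 1 ≤ V t₀
    have h1le : 1 ≤ V t₀ := by
      have hclos : t₀ ∈ closure S := csInf_mem_closure hSne hSbd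
      obtain ⟨u, huS, hulim⟩ := mem_closure_iff_seq_limit.mp hclos
      have hVlim : Filter.Tendsto (fun k => V (u k)) Filter.atTop (nhds (V t₀)) :=
        hVcont.tendsto.comp hulim
      exact ge_of_tendsto' hVlim fun k => le_of_lt (huS k).2
    -- V t₀ ≤ 1
    have hle1 : V t₀ ≤ 1 := by
      rcases eq_or_lt_of_le ht₀0 with heq | hpos
      · rw [← heq]; exact hV0
      · have htend : Filter.Tendsto V (nhdsWithin t₀ (Set.Iio t₀)) (nhds (V t₀)) :=
          hVcont.tendsto.mono_left nhdsWithin_le_nhds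
        have hev : ∀ᶠ s in nhdsWithin t₀ (Set.Iio t₀), V s ≤ 1 := by
          filter_upwards [Ioo_mem_nhdsLT_of_mem (Set.mem_Ioc.mpr ⟨hpos, le_refl t₀⟩)]
            with s hs
          by_contra hVs
          push_neg at hVs
          have hsS : s ∈ S := ⟨⟨le_of_lt hs.1, le_trans (le_of_lt hs.2) ht₀T⟩, hVs⟩
          exact absurd (csInf_le hSbd hsS) (not_le.mpr hs.2)
        exact le_of_tendsto htend hev
    have hVt₀ : V t₀ = 1 := le_antisymm hle1 h1le
    have ht₀S : t₀ ∉ S := fun h => lt_irrefl (1:ℝ) (hVt₀ ▸ h.2)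
    have hDneg : D t₀ < 0 := by
      have := hDle t₀ ht₀0 hle1
      rw [hVt₀] at this
      linarith
    have hslope : Filter.Tendsto (slope V t₀) (nhdsWithin t₀ {t₀}ᶜ) (nhds (D t₀)) :=
      hasDerivAt_iff_tendsto_slope.mp (hVder t₀ ht₀0)
    have hslope' : Filter.Tendsto (slope V t₀) (nhdsWithin t₀ (Set.Ioi t₀)) (nhds (D t₀)) :=
      hslope.mono_left (nhdsWithin_mono _ fun s hs => ne_of_gt (Set.mem_Ioi.mp hs))
    have hev2 : ∀ᶠ s in nhdsWithin t₀ (Set.Ioi t₀), slope V t₀ s < 0 :=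
      hslope'.eventually_lt_const hDneg
    have hfreq : ∃ᶠ s in nhdsWithin t₀ (Set.Ioi t₀), s ∈ S := by
      rw [Filter.frequently_iff]
      intro U hU
      obtain ⟨δ, hδ, hsub⟩ := Metric.mem_nhdsWithin_iff.mp hU
      obtain ⟨s, hsS, hslt⟩ := (csInf_lt_iff hSbd hSne).mp (lt_add_of_pos_right t₀ hδ)
      have hst : t₀ < s := lt_of_le_of_ne (csInf_le hSbd hsS) fun h => ht₀S (h ▸ hsS)
      refine ⟨s, hsub ⟨?_, hst⟩, hsS⟩
      rw [Metric.mem_ball, Real.dist_eq, abs_lt]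
      constructor <;> linarith
    obtain ⟨s, hsS, hsl⟩ := (hfreq.and_eventually hev2).exists
    have hst : t₀ < s := lt_of_le_of_ne (csInf_le hSbd hsS) fun h => ht₀S (h ▸ hsS)
    rw [slope_def_field] at hsl
    have hnum : V s - V t₀ < 0 := by
      rcases div_neg_iff.mp hsl with ⟨h1, h2⟩ | ⟨h1, h2⟩
      · linarith
      · exact h1
    rw [hVt₀] at hnum
    have := hsS.2
    linarith
  refine ⟨fun t ht => hinv t ht, ?_⟩
  -- exponential decay
  set W : ℝ → ℝ := fun t => V t * Real.exp (K * t) with hWdef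
  have hWder : ∀ t : ℝ, 0 ≤ t →
      HasDerivAt W (D t * Real.exp (K * t) + V t * (Real.exp (K * t) * K)) t := by
    intro t ht
    have hexp : HasDerivAt (fun s => Real.exp (K * s)) (Real.exp (K * t) * K) t := by
      simpa using ((hasDerivAt_id t).const_mul K).exp
    exact (hVder t ht).mul hexp
  have hWanti : AntitoneOn W (Set.Ici (0:ℝ)) := by
    apply antitoneOn_of_hasDerivWithinAt_nonpos (convex_Ici 0)
      (fun t ht => ((hWder t ht).continuousAt).continuousWithinAt)
      (f' := fun t => D t * Real.exp (K * t) + V t * (Real.exp (K * t) * K))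
    · intro t ht
      rw [interior_Ici] at ht
      exact (hWder t (le_of_lt ht)).hasDerivWithinAt
    · intro t ht
      rw [interior_Ici] at ht
      have h1 := hDle t (le_of_lt ht) (hinv t (le_of_lt ht))
      nlinarith [Real.exp_pos (K * t)]
  have hbound : ∀ t : ℝ, 0 ≤ t → V t ≤ (Real.exp (K * t))⁻¹ := by
    intro t ht
    have h1 : W t ≤ W 0 := hWanti Set.self_mem_Ici ht ht
    have hW0 : W 0 = V 0 := by simp [hWdef]
    have h2 : V t * Real.exp (K * t) ≤ 1 := by
      have : W t ≤ 1 := by rw [hW0] at h1; linarith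
      simpa [hWdef] using this
    rw [← one_div, le_div_iff₀ (Real.exp_pos _)]
    exact h2
  rcases isEmpty_or_nonempty (Fin n) with hemp | hne
  · have : x = fun _ => (0 : Fin n → ℝ) := funext fun t => funext fun i => (hemp.elim i)
    rw [this]
    exact tendsto_const_nhds
  · obtain ⟨c, hc0, hc⟩ := posdef_lower hPpd
    have hb : ∀ t : ℝ, 0 ≤ t → ‖x t‖ ^ 2 ≤ c⁻¹ * (Real.exp (K * t))⁻¹ := by
      intro t ht
      have h1 := hc (x t)
      have h2 := hbound t ht
      calc ‖x t‖ ^ 2 = c⁻¹ * (c * ‖x t‖ ^ 2) := by field_simp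
        _ ≤ c⁻¹ * (Real.exp (K * t))⁻¹ :=
            mul_le_mul_of_nonneg_left (le_trans h1 h2) (inv_nonneg.mpr hc0.le)
    have hg : Filter.Tendsto (fun t => c⁻¹ * (Real.exp (K * t))⁻¹) Filter.atTop (nhds 0) := by
      have hKt : Filter.Tendsto (fun t : ℝ => Real.exp (K * t)) Filter.atTop Filter.atTop :=
        Real.tendsto_exp_atTop.comp (Filter.Tendsto.const_mul_atTop hK0 Filter.tendsto_id)
      simpa using (Filter.Tendsto.inv_tendsto_atTop hKt).const_mul c⁻¹
    have hsq : Filter.Tendsto (fun t => ‖x t‖ ^ 2) Filter.atTop (nhds 0) :=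
      squeeze_zero' (Filter.Eventually.of_forall fun t => sq_nonneg _)
        ((Filter.eventually_ge_atTop 0).mono fun t ht => hb t ht) hg
    have hnorm : Filter.Tendsto (fun t => ‖x t‖) Filter.atTop (nhds 0) := by
      have hcomp := (Real.continuous_sqrt.tendsto' 0 0 (by simp)).comp hsq
      simpa [Function.comp_def, Real.sqrt_sq (norm_nonneg _)] using hcomp
    exact tendsto_zero_iff_norm_tendsto_zero.mpr hnorm
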